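/- Let P \subset \mathbb{R}^d be a lattice polytope (not necessarily full-dimensional) projecting onto a lattice (d-1)-polytope Q under the projection forgetting the last coordinate. Then for each n \in \mathbb{N} there are only finitely many lattice d-polytopes P' with at most n lattice points such that P \subseteq P' and P' projects onto Q. -/

import Mathlib

open Set MeasureTheory

noncomputable section

/-- Cast an integer point to a real point. -/
def ratl {d : ℕ} (x : Fin d → ℤ) : Fin d → ℝ := fun i => (x i : ℝ)

/-- A lattice polytope: convex hull of finitely many integer points. -/
def IsLatticePolytope {d : ℕ} (P : Set (Fin d → ℝ)) : Prop :=
  ∃ V : Finset (Fin d → ℤ), V.Nonempty ∧ P = convexHull ℝ (ratl '' ↑V)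

/-- Width of a set with respect to an integer linear functional. -/
def widthF {d : ℕ} (P : Set (Fin d → ℝ)) (l : Fin d → ℤ) : ℝ :=
  sSup ((fun pq : (Fin d → ℝ) × (Fin d → ℝ) =>
    |∑ i, (l i : ℝ) * (pq.1 i - pq.2 i)|) '' (P ×ˢ P))

/-- Lattice width: min over nonzero integer functionals. -/
def latWidth {d : ℕ} (P : Set (Fin d → ℝ)) : ℝ :=
  sInf (Set.range fun l : {l : Fin d → ℤ // l ≠ 0} => widthF P l.1)

/-- Number of lattice points of a set. -/
def latticeSize {d : ℕ} (P : Set (Fin d → ℝ)) : ℕ :=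
  {x : Fin d → ℤ | ratl x ∈ P}.ncard

/-- Integer affine map, acting on real points. -/
def affMap {d : ℕ} (A : Matrix (Fin d) (Fin d) ℤ) (b : Fin d → ℤ) (x : Fin d → ℝ) :
    Fin d → ℝ :=
  (A.map (Int.cast : ℤ → ℝ)).mulVec x + ratl b

/-- Unimodular equivalence of subsets of ℝ^d. -/
def UnimodEquiv {d : ℕ} (P P' : Set (Fin d → ℝ)) : Prop :=
  ∃ (A : Matrix (Fin d) (Fin d) ℤ) (b : Fin d → ℤ), IsUnit A.det ∧ affMap A b '' P = P'

/-- Projection forgetting the last coordinate. -/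
def proj {d : ℕ} (x : Fin (d+1) → ℝ) : Fin d → ℝ := fun i => x i.castSucc

/-- Equivalence of lifts: a unimodular equivalence commuting with the projection. -/
def LiftEquiv {d : ℕ} (P₁ P₂ : Set (Fin (d+1) → ℝ)) : Prop :=
  ∃ (A : Matrix (Fin (d+1)) (Fin (d+1)) ℤ) (b : Fin (d+1) → ℤ), IsUnit A.det ∧
    affMap A b '' P₁ = P₂ ∧ ∀ x ∈ P₁, proj (affMap A b x) = proj x

lemma ratl_injective {d : ℕ} : Function.Injective (ratl (d := d)) := by
  intro x y h
  funext i
  have := congrFun h i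
  simpa [ratl] using this

lemma latticePolytope_isCompact {d : ℕ} {P : Set (Fin d → ℝ)} (hP : IsLatticePolytope P) :
    IsCompact P := by
  obtain ⟨V, -, rfl⟩ := hP
  exact (V.finite_toSet.image ratl).isCompact_convexHull ℝ

lemma latticePoints_finite {d : ℕ} {P : Set (Fin d → ℝ)}
    (hP : Bornology.IsBounded P) : {x : Fin d → ℤ | ratl x ∈ P}.Finite := by
  obtain ⟨C, hC⟩ := hP.exists_norm_le
  refine Set.Finite.subset
    (Finset.Icc (fun _ : Fin d => -⌈C⌉) (fun _ => ⌈C⌉)).finite_toSet ?_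
  intro x hx
  have hb : ∀ i, |(x i : ℝ)| ≤ C := by
    intro i
    calc |(x i : ℝ)| = ‖ratl x i‖ := by simp [ratl]
      _ ≤ ‖ratl x‖ := norm_le_pi_norm _ i
      _ ≤ C := hC _ hx
  simp only [Finset.coe_Icc, Set.mem_Icc, Pi.le_def]
  constructor <;> intro i
  · have h1 := (abs_le.mp (hb i)).1
    have h2 : (-(⌈C⌉:ℝ)) ≤ (x i : ℝ) := le_trans (by linarith [Int.le_ceil C]) h1
    exact_mod_cast h2
  · have h1 := (abs_le.mp (hb i)).2
    have h2 : ((x i : ℝ)) ≤ (⌈C⌉:ℝ) := h1.trans (Int.le_ceil C)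
    exact_mod_cast h2

lemma height_bound {d n : ℕ} {Q : Set (Fin d → ℝ)} {P P' : Set (Fin (d+1) → ℝ)}
    (hP'conv : Convex ℝ P') (hP'fin : {y : Fin (d+1) → ℤ | ratl y ∈ P'}.Finite)
    (hsize : latticeSize P' ≤ n) (hPP' : P ⊆ P') (hproj : proj '' P = Q)
    (hproj' : proj '' P' = Q) {C : ℝ} (hC : ∀ y ∈ P, ‖y‖ ≤ C)
    {x : Fin (d+1) → ℤ} (hx : ratl x ∈ P') :
    |(x (Fin.last d) : ℝ)| ≤ C + n + 1 := by
  classical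
  -- find p ∈ P over the same base point
  have hqQ : proj (ratl x) ∈ Q := hproj' ▸ ⟨ratl x, hx, rfl⟩
  obtain ⟨p, hp, hpq⟩ : ∃ p ∈ P, proj p = proj (ratl x) := by
    rw [← hproj] at hqQ; obtain ⟨p, hp, hpq⟩ := hqQ; exact ⟨p, hp, hpq⟩
  set a : ℝ := p (Fin.last d) with ha
  set h : ℝ := (x (Fin.last d) : ℝ) with hh
  have hpbase : ∀ i : Fin d, p i.castSucc = (x i.castSucc : ℝ) := by
    intro i
    have := congrFun hpq i
    simpa [proj, ratl] using this
  -- the lattice points on the vertical segment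
  set z : ℤ → (Fin (d+1) → ℤ) := fun k => Fin.lastCases k (fun i => x i.castSucc) with hz
  have hzlast : ∀ k, z k (Fin.last d) = k := fun k => by simp [hz]
  have hzmem : ∀ k : ℤ, min h a ≤ (k:ℝ) → (k:ℝ) ≤ max h a → ratl (z k) ∈ P' := by
    intro k hk1 hk2
    by_cases heq : h = a
    · have hk : (k:ℝ) = h := le_antisymm (by simpa [heq] using hk2) (by simpa [heq] using hk1)
      have hkx : k = x (Fin.last d) := by exact_mod_cast hk.trans hh
      have : z k = x := by
        funext j
        refine Fin.lastCases ?_ (fun i => ?_) j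
        · simpa [hz] using hkx
        · simp [hz]
      rw [this]; exact hx
    · set t : ℝ := ((k:ℝ) - a) / (h - a) with ht
      have hha : h - a ≠ 0 := sub_ne_zero.mpr heq
      have ht01 : 0 ≤ t ∧ t ≤ 1 := by
        rcases lt_or_gt_of_ne heq with hlt | hgt
        · -- h < a
          have h1 : h ≤ (k:ℝ) := by rw [min_eq_left (le_of_lt hlt)] at hk1; exact hk1
          have h2 : (k:ℝ) ≤ a := by rw [max_eq_right (le_of_lt hlt)] at hk2; exact hk2
          have hden : (0:ℝ) < a - h := by linarith
          have htt : t = (a - (k:ℝ))/(a - h) := by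
            rw [ht, div_eq_div_iff hha (by linarith : a - h ≠ 0)]; ring
          rw [htt]
          exact ⟨div_nonneg (by linarith) hden.le, (div_le_one hden).mpr (by linarith)⟩
        · -- h > a
          have h1 : a ≤ (k:ℝ) := by rw [min_eq_right (le_of_lt hgt)] at hk1; exact hk1
          have h2 : (k:ℝ) ≤ h := by rw [max_eq_left (le_of_lt hgt)] at hk2; exact hk2
          have hden : (0:ℝ) < h - a := by linarith
          exact ⟨div_nonneg (by linarith) hden.le, (div_le_one hden).mpr (by linarith)⟩
      have hseg : (1 - t) • p + t • (ratl x) ∈ P' :=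
        hP'conv (hPP' hp) hx (by linarith [ht01.2]) ht01.1 (by ring)
      have : ratl (z k) = (1 - t) • p + t • (ratl x) := by
        funext j
        refine Fin.lastCases ?_ (fun i => ?_) j
        · show (z k (Fin.last d) : ℝ) = (1 - t) * a + t * h
          rw [hzlast]
          have : t * (h - a) = (k:ℝ) - a := div_mul_cancel₀ _ hha
          linarith [this]
        · show (z k i.castSucc : ℝ) = (1 - t) * p i.castSucc + t * (ratl x i.castSucc)
          have hzc : z k i.castSucc = x i.castSucc := by simp [hz]
          rw [hzc, hpbase i]
          show (x i.castSucc : ℝ) = (1-t) * (x i.castSucc : ℝ) + t * (x i.castSucc : ℝ)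
          ring
      rw [this]; exact hseg
  -- count lattice points
  set K : Finset ℤ := Finset.Icc ⌈min h a⌉ ⌊max h a⌋ with hK
  have hKsub : (z '' ↑K) ⊆ {y : Fin (d+1) → ℤ | ratl y ∈ P'} := by
    rintro - ⟨k, hk, rfl⟩
    simp only [hK, Finset.coe_Icc, Set.mem_Icc] at hk
    exact hzmem k (Int.ceil_le.mp hk.1) (Int.le_floor.mp hk.2)
  have hzinj : Function.Injective z := by
    intro k k' hkk
    have := congrFun hkk (Fin.last d)
    rwa [hzlast, hzlast] at this
  have hcard : K.card ≤ n := by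
    have h1 : (z '' ↑K).ncard = K.card := by
      rw [Set.ncard_image_of_injective _ hzinj, Set.ncard_coe_finset]
    have h2 : (z '' ↑K).ncard ≤ latticeSize P' := Set.ncard_le_ncard hKsub hP'fin
    omega
  have hcard2 : (⌊max h a⌋ + 1 - ⌈min h a⌉ : ℤ) ≤ (n:ℤ) := by
    have := Int.card_Icc ⌈min h a⌉ ⌊max h a⌋
    have h3 : (⌊max h a⌋ + 1 - ⌈min h a⌉ : ℤ).toNat ≤ n := by rw [← this]; exact_mod_cast hcard
    omega
  have hreal : max h a - min h a ≤ (n:ℝ) + 1 := by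
    have h4 : max h a ≤ (⌊max h a⌋:ℝ) + 1 := le_of_lt (Int.lt_floor_add_one _)
    have h5 : (⌈min h a⌉:ℝ) ≤ min h a + 1 := le_of_lt (Int.ceil_lt_add_one _)
    have h6 : ((⌊max h a⌋:ℝ) + 1 - ⌈min h a⌉) ≤ (n:ℝ) := by exact_mod_cast hcard2
    linarith
  have haC : |a| ≤ C := by
    calc |a| = ‖p (Fin.last d)‖ := rfl
      _ ≤ ‖p‖ := norm_le_pi_norm _ _
      _ ≤ C := hC _ hp
  have : |h - a| ≤ (n:ℝ) + 1 := by
    rw [abs_sub_le_iff]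
    constructor <;> [skip; skip] <;>
      · have := le_max_left h a
        have := le_max_right h a
        have := min_le_left h a
        have := min_le_right h a
        linarith
  calc |h| = |a + (h - a)| := by ring_nf
    _ ≤ |a| + |h - a| := abs_add_le _ _
    _ ≤ C + n + 1 := by linarith

/-- There are only finitely many lattice polytopes of bounded size that contain a given
polytope P and project onto the same Q. -/
theorem finitely_many_containing_lifts (d n : ℕ) (Q : Set (Fin d → ℝ))
    (hQ : IsLatticePolytope Q) (P : Set (Fin (d+1) → ℝ))
    (hP : IsLatticePolytope P) (hproj : proj '' P = Q) :
    {P' : Set (Fin (d+1) → ℝ) | IsLatticePolytope P' ∧ latticeSize P' ≤ n ∧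
      P ⊆ P' ∧ proj '' P' = Q}.Finite := by
  classical
  have hQcomp : IsCompact Q := latticePolytope_isCompact hQ
  have hPcomp : IsCompact P := latticePolytope_isCompact hP
  obtain ⟨R, hR⟩ := hQcomp.isBounded.exists_norm_le
  obtain ⟨C, hC⟩ := hPcomp.isBounded.exists_norm_le
  set C' : ℝ := max C 0 with hC'def
  set R' : ℝ := max R 0 with hR'def
  have hC' : ∀ y ∈ P, ‖y‖ ≤ C' := fun y hy => (hC y hy).trans (le_max_left _ _)
  have hR' : ∀ y ∈ Q, ‖y‖ ≤ R' := fun y hy => (hR y hy).trans (le_max_left _ _)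
  have hC0 : (0:ℝ) ≤ C' := le_max_right _ _
  have hR0 : (0:ℝ) ≤ R' := le_max_right _ _
  set M : ℤ := ⌈R'⌉ + ⌈C'⌉ + n + 1 with hM
  set B : Finset (Fin (d+1) → ℤ) := Finset.Icc (fun _ => -M) (fun _ => M) with hB
  have key : ∀ P' : Set (Fin (d+1) → ℝ), IsLatticePolytope P' → latticeSize P' ≤ n →
      P ⊆ P' → proj '' P' = Q → ∀ x : Fin (d+1) → ℤ, ratl x ∈ P' → x ∈ B := by
    intro P' hP'lp hsize hPP' hproj' x hx
    have hconv : Convex ℝ P' := by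
      obtain ⟨V, -, rfl⟩ := hP'lp; exact convex_convexHull ℝ _
    have hfin : {y : Fin (d+1) → ℤ | ratl y ∈ P'}.Finite :=
      latticePoints_finite (latticePolytope_isCompact hP'lp).isBounded
    have hlast := height_bound hconv hfin hsize hPP' hproj hproj' hC' hx
    have hcoords : ∀ i : Fin d, |(x i.castSucc : ℝ)| ≤ R' := by
      intro i
      have hq : proj (ratl x) ∈ Q := hproj' ▸ ⟨ratl x, hx, rfl⟩
      calc |(x i.castSucc : ℝ)| = ‖proj (ratl x) i‖ := by simp [proj, ratl]
        _ ≤ ‖proj (ratl x)‖ := norm_le_pi_norm _ i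
        _ ≤ R' := hR' _ hq
    have hCc : C' ≤ (⌈C'⌉:ℝ) := Int.le_ceil _
    have hRc : R' ≤ (⌈R'⌉:ℝ) := Int.le_ceil _
    have hCc0 : (0:ℝ) ≤ (⌈C'⌉:ℝ) := le_trans hC0 hCc
    have hRc0 : (0:ℝ) ≤ (⌈R'⌉:ℝ) := le_trans hR0 hRc
    have hMr : (M:ℝ) = (⌈R'⌉:ℝ) + (⌈C'⌉:ℝ) + n + 1 := by rw [hM]; push_cast; ring
    simp only [hB, Finset.mem_Icc, Pi.le_def]
    constructor <;> intro j <;>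
      refine Fin.lastCases ?_ (fun i => ?_) j
    · have h1 : -(M:ℝ) ≤ (x (Fin.last d) : ℝ) := by
        have := (abs_le.mp hlast).1; rw [hMr]; linarith
      exact_mod_cast h1
    · have h1 : -(M:ℝ) ≤ (x i.castSucc : ℝ) := by
        have := (abs_le.mp (hcoords i)).1; rw [hMr]; linarith
      exact_mod_cast h1
    · have h1 : (x (Fin.last d) : ℝ) ≤ (M:ℝ) := by
        have := (abs_le.mp hlast).2; rw [hMr]; linarith
      exact_mod_cast h1
    · have h1 : (x i.castSucc : ℝ) ≤ (M:ℝ) := by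
        have := (abs_le.mp (hcoords i)).2; rw [hMr]; linarith
      exact_mod_cast h1
  have hcover : {P' : Set (Fin (d+1) → ℝ) | IsLatticePolytope P' ∧ latticeSize P' ≤ n ∧
      P ⊆ P' ∧ proj '' P' = Q} ⊆
      (fun F : Finset (Fin (d+1) → ℤ) => convexHull ℝ (ratl '' ↑F)) '' {F | F ⊆ B} := by
    rintro P' ⟨hP'lp, hsize, hPP', hproj'⟩
    set F : Finset (Fin (d+1) → ℤ) := B.filter (fun y => ratl y ∈ P') with hF
    refine ⟨F, fun y hy => (Finset.mem_filter.mp hy).1, ?_⟩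
    obtain ⟨V, hVne, hVeq⟩ := hP'lp
    have hconv : Convex ℝ P' := hVeq ▸ convex_convexHull ℝ _
    apply Set.Subset.antisymm
    · apply convexHull_min _ hconv
      rintro - ⟨y, hy, rfl⟩
      exact (Finset.mem_filter.mp hy).2
    · conv_lhs => rw [hVeq]
      apply convexHull_mono
      rintro - ⟨v, hv, rfl⟩
      refine ⟨v, ?_, rfl⟩
      have hvP' : ratl v ∈ P' := hVeq ▸ subset_convexHull ℝ _ ⟨v, hv, rfl⟩
      exact Finset.mem_filter.mpr
        ⟨key P' ⟨V, hVne, hVeq⟩ hsize hPP' hproj' v hvP', hvP'⟩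
  refine Set.Finite.subset (Set.Finite.image _ ?_) hcover
  exact B.powerset.finite_toSet.subset (fun F hF => Finset.mem_powerset.mpr hF)
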